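/- Deleting two adjacent vertices from the Heawood graph yields a graph isomorphic to the Möbius ladder M₄ with each rung subdivided once: the induced subgraph of the Heawood graph on the 12 vertices other than the adjacent pair (point 0, line 1) is isomorphic to the subdivided Möbius ladder. -/
import Mathlib


/-- The Heawood graph as the bipartite incidence graph of the Fano plane. -/
def heawoodGraph : SimpleGraph (ZMod 7 ⊕ ZMod 7) :=
  SimpleGraph.fromRel (fun u v => ∃ i j : ZMod 7,
    u = Sum.inl i ∧ v = Sum.inr j ∧ (j - i = 1 ∨ j - i = 2 ∨ j - i = 4))

/-- The Möbius ladder `M₄` with each rung subdivided once: vertices `Fin 8 ⊕ Fin 4`, cycle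
edges `{inl i, inl (i+1)}` for `i : Fin 8`, and for each `k : Fin 4` the subdivided rung
edges `{inl k, inr k}` and `{inr k, inl (k+4)}`. -/
def subdividedMobiusLadder : SimpleGraph (Fin 8 ⊕ Fin 4) :=
  SimpleGraph.fromRel (fun u v =>
    (∃ i : Fin 8, u = Sum.inl i ∧ v = Sum.inl (i + 1)) ∨
    (∃ k : Fin 4,
      (u = Sum.inl (Fin.castLE (by omega) k) ∧ v = Sum.inr k) ∨
      (u = Sum.inr k ∧ v = Sum.inl (Fin.castLE (by omega) k + 4))))

def heawoodToLadder : ZMod 7 ⊕ ZMod 7 → Fin 8 ⊕ Fin 4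
  | .inl i =>
      if i = 1 then .inl 0 else if i = 2 then .inl 2 else if i = 3 then .inl 6
      else if i = 5 then .inl 4 else if i = 6 then .inr 1 else if i = 4 then .inr 3
      else .inl 0
  | .inr j =>
      if j = 3 then .inl 1 else if j = 6 then .inl 3 else if j = 0 then .inl 5
      else if j = 5 then .inl 7 else if j = 2 then .inr 0 else if j = 4 then .inr 2
      else .inl 0

def ladderToHeawood : Fin 8 ⊕ Fin 4 → ZMod 7 ⊕ ZMod 7
  | .inl 0 => .inl 1
  | .inl 1 => .inr 3
  | .inl 2 => .inl 2
  | .inl 3 => .inr 6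
  | .inl 4 => .inl 5
  | .inl 5 => .inr 0
  | .inl 6 => .inl 3
  | .inl 7 => .inr 5
  | .inr 0 => .inr 2
  | .inr 1 => .inl 6
  | .inr 2 => .inr 4
  | .inr 3 => .inl 4

instance : DecidableRel heawoodGraph.Adj := fun a b =>
  decidable_of_iff _ (SimpleGraph.fromRel_adj _ a b).symm

instance : DecidableRel subdividedMobiusLadder.Adj := fun a b =>
  decidable_of_iff _ (SimpleGraph.fromRel_adj _ a b).symm

/-- Deleting the two adjacent vertices `inl 0` (point 0) and `inr 1` (line 1) from the
Heawood graph yields a graph isomorphic to the Möbius ladder `M₄` with each rung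
subdivided once. -/
theorem heawood_minus_two_vertices_iso_subdivided_mobius_ladder :
    Nonempty
      ((heawoodGraph.induce {v : ZMod 7 ⊕ ZMod 7 | v ≠ Sum.inl 0 ∧ v ≠ Sum.inr 1}) ≃g
        subdividedMobiusLadder) := by
  refine ⟨⟨⟨fun v => heawoodToLadder v.1,
    fun w => ⟨ladderToHeawood w, by revert w; decide⟩, ?_, ?_⟩, ?_⟩⟩
  · intro v; ext : 1; obtain ⟨v, hv⟩ := v; revert hv; revert v; decide
  · intro w; revert w; decide
  · intro a b
    obtain ⟨a, ha, ha'⟩ := a; obtain ⟨b, hb, hb'⟩ := b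
    show subdividedMobiusLadder.Adj (heawoodToLadder a) (heawoodToLadder b) ↔
      heawoodGraph.Adj a b
    revert ha ha' hb hb'; revert a b; decide
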